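/- Cauchy–Binet for pseudo-determinants (Theorem 1): Let F and G be complex n×m matrices and let k be the number of nonzero roots, counted with multiplicity, of the characteristic polynomial of the m×m matrix FᵀG. Then the product of these nonzero roots (equal to 1 when k = 0) satisfies Det(FᵀG) = Σ_{(I,J)} det(F_{I,J})·det(G_{I,J}), the sum running over all pairs (I,J) with I a k-element subset of the row indices {1,…,n} and J a k-element subset of the column indices {1,…,m}; when k = 0 the right-hand side is the empty pattern contribution 1. -/

import Mathlib

open Matrix Polynomial Finset Equiv

/-- The minor of an `n × m` complex matrix `F` given by a `k`-element set `I` of row indices and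
a `k`-element set `J` of column indices. For `k = 0` it equals `1`. -/
def Matrix.minorOn {n m k : ℕ} (F : Matrix (Fin n) (Fin m) ℂ)
    (I : {s : Finset (Fin n) // s.card = k}) (J : {s : Finset (Fin m) // s.card = k}) : ℂ :=
  (F.submatrix (I.1.orderEmbOfFin I.2) (J.1.orderEmbOfFin J.2)).det

/-- The pseudo-determinant of a square complex matrix: the product of the nonzero roots,
counted with multiplicity, of its characteristic polynomial `det(x·I − A)`; it is `1` when
all eigenvalues are zero. -/
noncomputable def PDet {ι : Type*} [Fintype ι] [DecidableEq ι] (A : Matrix ι ι ℂ) : ℂ :=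
  (A.charpoly.roots.filter (· ≠ 0)).prod

/-- If the rows of `B` indexed by `S` are standard basis vectors, the determinant of `B`
equals the determinant of the principal submatrix on the complement of `S`. -/
theorem det_rows_single {R : Type*} [CommRing R] {m : ℕ} (B : Matrix (Fin m) (Fin m) R)
    (S : Finset (Fin m))
    (hB : ∀ i ∈ S, ∀ j, B i j = if i = j then 1 else 0) :
    B.det = (B.submatrix (Sᶜ.orderEmbOfFin rfl) (Sᶜ.orderEmbOfFin rfl)).det := by
  classical
  let e : Fin S.card ⊕ Fin Sᶜ.card ≃ Fin m :=
    ((S.orderIsoOfFin rfl).toEquiv.sumCongr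
      ((Sᶜ.orderIsoOfFin rfl).toEquiv.trans (Equiv.subtypeEquivRight
        (fun x => Finset.mem_compl)))).trans (Equiv.sumCompl (· ∈ S))
  have he1 : ∀ a, e (Sum.inl a) = S.orderEmbOfFin rfl a := fun a => rfl
  have he2 : ∀ a, e (Sum.inr a) = Sᶜ.orderEmbOfFin rfl a := fun a => rfl
  have key : B.submatrix e e =
      Matrix.fromBlocks 1 0 (B.submatrix (Sᶜ.orderEmbOfFin rfl) (S.orderEmbOfFin rfl))
        (B.submatrix (Sᶜ.orderEmbOfFin rfl) (Sᶜ.orderEmbOfFin rfl)) := by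
    ext i j
    cases i with
    | inl a =>
      have ha : (S.orderEmbOfFin rfl a) ∈ S := S.orderEmbOfFin_mem rfl a
      cases j with
      | inl b =>
        simp only [submatrix_apply, he1, fromBlocks_apply₁₁, Matrix.one_apply]
        rw [hB _ ha]
        simp [EmbeddingLike.apply_eq_iff_eq]
      | inr b =>
        simp only [submatrix_apply, he1, he2, fromBlocks_apply₁₂, Matrix.zero_apply]
        rw [hB _ ha]
        have hb : (Sᶜ.orderEmbOfFin rfl b) ∈ Sᶜ := Sᶜ.orderEmbOfFin_mem rfl b
        rw [if_neg]
        rintro h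
        rw [Finset.mem_compl] at hb
        exact hb (h ▸ ha)
    | inr a =>
      cases j with
      | inl b => rfl
      | inr b => rfl
  rw [← Matrix.det_submatrix_equiv_self e, key, Matrix.det_fromBlocks_zero₁₂, Matrix.det_one,
    one_mul]

theorem det_mul_sum_fun {R : Type*} [CommRing R] {k n : ℕ}
    (M : Matrix (Fin k) (Fin n) R) (N : Matrix (Fin n) (Fin k) R) :
    (M * N).det = ∑ f : Fin k → Fin n, (∏ i, M i (f i)) * (N.submatrix f id).det := by
  classical
  have h1 : (M * N).det = Matrix.detRowAlternating (fun i => ∑ j, (fun l => M i l • N l) j) := by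
    congr 1
    ext i j
    simp [Matrix.mul_apply, Finset.sum_apply]
  have h2 := Matrix.detRowAlternating.toMultilinearMap.map_sum (fun (i : Fin k) (l : Fin n) =>
    M i l • N l)
  rw [h1]
  rw [show Matrix.detRowAlternating (fun i => ∑ j, (fun l => M i l • N l) j)
      = Matrix.detRowAlternating.toMultilinearMap (fun i => ∑ j, (fun l => M i l • N l) j)
    from rfl, h2]
  refine Finset.sum_congr rfl fun f _ => ?_
  have h3 := Matrix.detRowAlternating.toMultilinearMap.map_smul_univ
    (fun i => M i (f i)) (fun i => N (f i))
  rw [show (Matrix.detRowAlternating.toMultilinearMap fun i => M i (f i) • N (f i)) = _ from h3]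
  rw [smul_eq_mul]
  rfl



/-- Cauchy–Binet. -/
theorem cauchy_binet {R : Type*} [CommRing R] {k n : ℕ}
    (M : Matrix (Fin k) (Fin n) R) (N : Matrix (Fin n) (Fin k) R) :
    (M * N).det = ∑ I : {s : Finset (Fin n) // s.card = k},
      (M.submatrix id (I.1.orderEmbOfFin I.2)).det * (N.submatrix (I.1.orderEmbOfFin I.2) id).det := by
  classical
  rw [det_mul_sum_fun]
  rw [← Finset.sum_filter_add_sum_filter_not Finset.univ (fun f => Function.Injective f)]
  have hnon : ∑ f ∈ Finset.univ.filter (fun f : Fin k → Fin n => ¬ Function.Injective f),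
      (∏ i, M i (f i)) * (N.submatrix f id).det = 0 := by
    refine Finset.sum_eq_zero fun f hf => ?_
    simp only [Finset.mem_filter, Function.Injective] at hf
    push_neg at hf
    obtain ⟨i, j, hij, hne⟩ : ∃ i j, f i = f j ∧ i ≠ j := by simpa using hf
    have : (N.submatrix f id).det = 0 :=
      Matrix.det_zero_of_row_eq hne (by ext l; simp [hij])
    rw [this, mul_zero]
  rw [hnon, add_zero]
  have perI : ∀ I : {s : Finset (Fin n) // s.card = k},
      (M.submatrix id (I.1.orderEmbOfFin I.2)).det * (N.submatrix (I.1.orderEmbOfFin I.2) id).det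
      = ∑ σ : Equiv.Perm (Fin k),
          (∏ i, M i ((I.1.orderEmbOfFin I.2) (σ i))) *
            (N.submatrix ((I.1.orderEmbOfFin I.2) ∘ σ) id).det := by
    intro I
    set emb := I.1.orderEmbOfFin I.2 with hemb
    have h1 : ∀ σ : Equiv.Perm (Fin k), (N.submatrix (emb ∘ σ) id).det
        = (Equiv.Perm.sign σ : R) * (N.submatrix emb id).det := by
      intro σ
      have : N.submatrix (emb ∘ σ) id = (N.submatrix emb id).submatrix σ id := by
        ext i j; simp [Matrix.submatrix_apply]
      rw [this, Matrix.det_permute]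
    have h2 : (M.submatrix id emb).det = ∑ σ : Equiv.Perm (Fin k),
        (Equiv.Perm.sign σ : R) * ∏ i, M i (emb (σ i)) := by
      rw [← Matrix.det_transpose, Matrix.det_apply']
      rfl
    rw [h2, Finset.sum_mul]
    refine Finset.sum_congr rfl fun σ _ => ?_
    rw [h1 σ]
    ring
  rw [Finset.sum_congr rfl (fun I _ => perI I), ← Finset.sum_product']
  refine (Finset.sum_bij (fun p _ => (p.1.1.orderEmbOfFin p.1.2) ∘ p.2) ?_ ?_ ?_ ?_).symm
  · intro p _
    simp only [Finset.mem_filter, Finset.mem_univ, true_and]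
    exact (p.1.1.orderEmbOfFin p.1.2).injective.comp p.2.injective
  · intro p _ q _ h
    have h' : ((p.1.1.orderEmbOfFin p.1.2) ∘ p.2 : Fin k → Fin n)
        = (q.1.1.orderEmbOfFin q.1.2) ∘ q.2 := h
    have himg : ∀ (r : {s : Finset (Fin n) // s.card = k} × Equiv.Perm (Fin k)),
        Finset.image ((r.1.1.orderEmbOfFin r.1.2) ∘ r.2) Finset.univ = r.1.1 := by
      intro r
      apply Finset.coe_injective
      rw [Finset.coe_image, Finset.coe_univ, Set.image_univ, Set.range_comp]
      rw [Equiv.range_eq_univ, Set.image_univ, Finset.range_orderEmbOfFin]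
    have h1 : p.1 = q.1 := by
      have hp := himg p
      rw [h', himg q] at hp
      exact Subtype.ext hp.symm
    have h2 : p.2 = q.2 := by
      apply Equiv.ext
      intro i
      apply (p.1.1.orderEmbOfFin p.1.2).injective
      have := congrFun h' i
      simp only [Function.comp_apply] at this ⊢
      rw [this, h1]
    exact Prod.ext h1 h2
  · intro f hf
    simp only [Finset.mem_filter, Finset.mem_univ, true_and] at hf
    set I : Finset (Fin n) := Finset.image f Finset.univ with hIdef
    have hIcard : I.card = k := by
      rw [hIdef, Finset.card_image_of_injective _ hf, Finset.card_univ, Fintype.card_fin]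
    have hmem : ∀ i, f i ∈ I := fun i => Finset.mem_image_of_mem f (Finset.mem_univ i)
    have hsurj : Function.Surjective (fun i => (⟨f i, hmem i⟩ : {x // x ∈ I})) := by
      rintro ⟨x, hx⟩
      rw [hIdef, Finset.mem_image] at hx
      obtain ⟨i, _, rfl⟩ := hx
      exact ⟨i, rfl⟩
    have hinj : Function.Injective (fun i => (⟨f i, hmem i⟩ : {x // x ∈ I})) := by
      intro i j h
      exact hf (congrArg Subtype.val h)
    let e1 : Fin k ≃ {x // x ∈ I} := Equiv.ofBijective _ ⟨hinj, hsurj⟩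
    let σ : Equiv.Perm (Fin k) := e1.trans (I.orderIsoOfFin hIcard).toEquiv.symm
    refine ⟨(⟨I, hIcard⟩, σ), Finset.mem_univ _, ?_⟩
    show (I.orderEmbOfFin hIcard) ∘ σ = f
    funext i
    show (I.orderEmbOfFin hIcard) (σ i) = f i
    rw [← Finset.coe_orderIsoOfFin_apply I hIcard (σ i)]
    show (((I.orderIsoOfFin hIcard).toEquiv ((I.orderIsoOfFin hIcard).toEquiv.symm (e1 i)) :
      {x // x ∈ I}) : Fin n) = f i
    rw [Equiv.apply_symm_apply]
    rfl
  · intro p _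
    rfl


theorem charpoly_expand {R : Type*} [CommRing R] {m : ℕ} (A : Matrix (Fin m) (Fin m) R) :
    A.charpoly = ∑ S : Finset (Fin m),
      Polynomial.C ((-1 : R) ^ (Sᶜ.card) *
        (A.submatrix (Sᶜ.orderEmbOfFin rfl) (Sᶜ.orderEmbOfFin rfl)).det) * X ^ S.card := by
  classical
  set u : Fin m → Fin m → R[X] := fun i => (X : R[X]) • (1 : Matrix (Fin m) (Fin m) R[X]) i with hu
  set v : Fin m → Fin m → R[X] := fun i => -((A.map Polynomial.C) i) with hv
  have hcm : A.charmatrix = Matrix.of (u + v) := by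
    ext i j
    by_cases h : i = j
    · subst h; simp [Matrix.charmatrix_apply_eq, hu, hv, Pi.add_apply, Matrix.one_apply, sub_eq_add_neg]
    · simp [Matrix.charmatrix_apply_ne _ _ _ h, hu, hv, Pi.add_apply, Matrix.one_apply, h]
  have hrows : A.charpoly = Matrix.detRowAlternating (u + v) := by
    unfold Matrix.charpoly
    rw [hcm]
    rfl
  rw [hrows, show Matrix.detRowAlternating (u + v)
      = Matrix.detRowAlternating.toMultilinearMap (u + v) from rfl,
    Matrix.detRowAlternating.toMultilinearMap.map_add_univ u v]
  refine Finset.sum_congr rfl fun S _ => ?_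
  set g : Fin m → Fin m → R[X] := S.piecewise (fun i => (1 : Matrix (Fin m) (Fin m) R[X]) i) v
    with hg
  have hpw : S.piecewise u v = S.piecewise (fun i => (X : R[X]) • g i) g := by
    funext i
    by_cases h : i ∈ S <;> simp [Finset.piecewise, h, hg, hu]
  rw [hpw, Matrix.detRowAlternating.toMultilinearMap.map_piecewise_smul (fun _ => (X : R[X])) g S,
    Finset.prod_const]
  have hdet : Matrix.detRowAlternating.toMultilinearMap g = (Matrix.of g).det := rfl
  rw [hdet, det_rows_single (Matrix.of g) S (fun i hi j => by
    simp [hg, Finset.piecewise, hi, Matrix.one_apply])]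
  have hsub : (Matrix.of g).submatrix (Sᶜ.orderEmbOfFin rfl) (Sᶜ.orderEmbOfFin rfl)
      = -(((A.submatrix (Sᶜ.orderEmbOfFin rfl) (Sᶜ.orderEmbOfFin rfl)).map Polynomial.C)) := by
    ext i j
    have hmem : (Sᶜ.orderEmbOfFin rfl i) ∉ S := by
      have := Sᶜ.orderEmbOfFin_mem rfl i
      rwa [Finset.mem_compl] at this
    simp [hg, Finset.piecewise, hmem, hv]
  rw [hsub, Matrix.det_neg]
  rw [show ((A.submatrix (Sᶜ.orderEmbOfFin rfl) (Sᶜ.orderEmbOfFin rfl)).map (⇑Polynomial.C))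
      = (Polynomial.C : R →+* R[X]).mapMatrix
          (A.submatrix (Sᶜ.orderEmbOfFin rfl) (Sᶜ.orderEmbOfFin rfl)) from rfl,
    ← RingHom.map_det]
  simp only [Fintype.card_fin, smul_eq_mul, _root_.map_mul, map_pow, map_neg, _root_.map_one]
  ring

theorem det_orderEmb_congr {R : Type*} [CommRing R] {m k : ℕ} (A : Matrix (Fin m) (Fin m) R)
    (s : Finset (Fin m)) (h : s.card = k) :
    (A.submatrix (s.orderEmbOfFin rfl) (s.orderEmbOfFin rfl)).det
      = (A.submatrix (s.orderEmbOfFin h) (s.orderEmbOfFin h)).det := by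
  subst h; rfl

theorem charpoly_coeff_sub {R : Type*} [CommRing R] {m k : ℕ} (A : Matrix (Fin m) (Fin m) R)
    (hk : k ≤ m) :
    A.charpoly.coeff (m - k) = (-1 : R) ^ k * ∑ P : {s : Finset (Fin m) // s.card = k},
      (A.submatrix (P.1.orderEmbOfFin P.2) (P.1.orderEmbOfFin P.2)).det := by
  classical
  rw [charpoly_expand, Polynomial.finset_sum_coeff]
  have hterm : ∀ S : Finset (Fin m),
      (Polynomial.C ((-1 : R) ^ (Sᶜ.card) *
          (A.submatrix (Sᶜ.orderEmbOfFin rfl) (Sᶜ.orderEmbOfFin rfl)).det) * X ^ S.card).coeff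
        (m - k)
      = if S.card = m - k then (-1 : R) ^ (Sᶜ.card) *
          (A.submatrix (Sᶜ.orderEmbOfFin rfl) (Sᶜ.orderEmbOfFin rfl)).det else 0 := by
    intro S
    rw [Polynomial.coeff_C_mul, Polynomial.coeff_X_pow]
    by_cases h : S.card = m - k <;> simp [h, eq_comm]
  rw [Finset.sum_congr rfl fun S _ => hterm S, ← Finset.sum_filter]
  -- complement bijection onto sets of cardinality k
  rw [Finset.sum_nbij' (i := fun S => Sᶜ) (j := fun P => Pᶜ)
    (t := Finset.univ.filter (fun s : Finset (Fin m) => s.card = k))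
    (g := fun P => (-1 : R) ^ P.card *
      (A.submatrix (P.orderEmbOfFin rfl) (P.orderEmbOfFin rfl)).det)
    (by intro S hS; simp only [Finset.mem_filter, Finset.mem_univ, true_and] at hS ⊢
        rw [Finset.card_compl, hS, Fintype.card_fin]; omega)
    (by intro P hP; simp only [Finset.mem_filter, Finset.mem_univ, true_and] at hP ⊢
        rw [Finset.card_compl, hP, Fintype.card_fin])
    (by intro S _; exact compl_compl S)
    (by intro P _; exact compl_compl P)
    (by intro S _; rfl)]
  rw [Finset.sum_subtype (p := fun s : Finset (Fin m) => s.card = k)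
    (Finset.univ.filter (fun s : Finset (Fin m) => s.card = k))
    (by intro x; simp) (fun P => (-1 : R) ^ P.card *
      (A.submatrix (P.orderEmbOfFin rfl) (P.orderEmbOfFin rfl)).det)]
  rw [Finset.mul_sum]
  refine Finset.sum_congr rfl fun P _ => ?_
  rw [det_orderEmb_congr A P.1 P.2, P.2]

theorem pdet_eq_coeff {m : ℕ} (A : Matrix (Fin m) (Fin m) ℂ) (k : ℕ)
    (hk : k = Multiset.card (A.charpoly.roots.filter (· ≠ 0))) :
    k ≤ m ∧ (A.charpoly.roots.filter (· ≠ 0)).prod = (-1 : ℂ) ^ k * A.charpoly.coeff (m - k) := by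
  classical
  set p := A.charpoly with hp
  have hmonic : p.Monic := A.charpoly_monic
  have hdeg : p.natDegree = m := by
    rw [hp, Matrix.charpoly_natDegree_eq_dim, Fintype.card_fin]
  have hroots : Multiset.card p.roots = m := by
    rw [(Polynomial.splits_iff_card_roots.mp (IsAlgClosed.splits p)), hdeg]
  set s := p.roots.filter (· ≠ 0) with hs
  set t := p.roots.filter (fun x => ¬ x ≠ 0) with ht
  have hst : s + t = p.roots := Multiset.filter_add_not _ _
  have hcards : k + Multiset.card t = m := by
    rw [hk, ← hroots, ← hst, Multiset.card_add]
  have hkm : k ≤ m := le_of_add_le_left hcards.le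
  refine ⟨hkm, ?_⟩
  have htcard : Multiset.card t = m - k := by omega
  have hfac : (p.roots.map fun a => X - C a).prod = p :=
    prod_multiset_X_sub_C_of_monic_of_roots_card_eq hmonic (by rw [hroots, hdeg])
  have htprod : (t.map fun a => X - C a).prod = X ^ (m - k) := by
    have : (t.map fun a => X - C a) = Multiset.replicate (m - k) X := by
      rw [Multiset.eq_replicate]
      constructor
      · rw [Multiset.card_map, htcard]
      · intro b hb
        rw [Multiset.mem_map] at hb
        obtain ⟨a, ha, rfl⟩ := hb
        rw [ht, Multiset.mem_filter] at ha
        have : a = 0 := not_not.mp ha.2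
        rw [this, map_zero, sub_zero]
    rw [this, Multiset.prod_replicate]
  have hfac2 : p = (s.map fun a => X - C a).prod * X ^ (m - k) := by
    rw [← hfac, ← hst, Multiset.map_add, Multiset.prod_add, htprod]
  have hcoeff : p.coeff (m - k) = ((s.map fun a => X - C a).prod).coeff 0 := by
    have h := Polynomial.coeff_mul_X_pow ((s.map fun a => X - C a).prod) (m - k) 0
    rw [Nat.zero_add] at h
    rw [← h, ← hfac2]
  rw [hcoeff, Polynomial.coeff_zero_eq_eval_zero, Polynomial.eval_multiset_prod,
    Multiset.map_map]
  have heval : s.map (Polynomial.eval 0 ∘ fun a => X - C a) = s.map Neg.neg := by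
    refine Multiset.map_congr rfl fun a _ => ?_
    simp
  rw [heval, Multiset.prod_map_neg, ← hk, ← mul_assoc, ← pow_add,
    Even.neg_one_pow ⟨k, rfl⟩, one_mul]

/-- Cauchy–Binet for pseudo-determinants: if `F, G` are complex `n × m` matrices and `k` is the
number of nonzero roots (with multiplicity) of the characteristic polynomial of `Fᵀ G`, then
`Det(Fᵀ G) = Σ_{(I,J)} det(F_{I,J}) det(G_{I,J})`, the sum over all pairs of `k`-element subsets
`I` of rows and `J` of columns; for `k = 0` the right-hand side is `1`. -/
theorem pdet_cauchy_binet {n m : ℕ} (F G : Matrix (Fin n) (Fin m) ℂ) (k : ℕ)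
    (hk : k = Multiset.card ((Fᵀ * G).charpoly.roots.filter (· ≠ 0))) :
    PDet (Fᵀ * G) =
      ∑ I : {s : Finset (Fin n) // s.card = k}, ∑ J : {s : Finset (Fin m) // s.card = k},
        F.minorOn I J * G.minorOn I J := by
  classical
  obtain ⟨hkm, hprod⟩ := pdet_eq_coeff (Fᵀ * G) k hk
  rw [PDet, hprod, charpoly_coeff_sub _ hkm, ← mul_assoc, ← pow_add,
    Even.neg_one_pow ⟨k, rfl⟩, one_mul]
  have hP : ∀ P : {s : Finset (Fin m) // s.card = k},
      ((Fᵀ * G).submatrix (P.1.orderEmbOfFin P.2) (P.1.orderEmbOfFin P.2)).det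
        = ∑ I : {s : Finset (Fin n) // s.card = k}, F.minorOn I P * G.minorOn I P := by
    intro P
    set emb := P.1.orderEmbOfFin P.2 with hemb
    have hfact : (Fᵀ * G).submatrix emb emb
        = (F.submatrix id emb)ᵀ * (G.submatrix id emb) := by
      ext a b
      simp [Matrix.mul_apply, Matrix.submatrix_apply, Matrix.transpose_apply]
    rw [hfact, cauchy_binet]
    refine Finset.sum_congr rfl fun I _ => ?_
    set embI := I.1.orderEmbOfFin I.2 with hembI
    have h1 : ((F.submatrix id emb)ᵀ).submatrix id embI = (F.submatrix embI emb)ᵀ := by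
      ext a b
      simp [Matrix.submatrix_apply, Matrix.transpose_apply]
    have h2 : (G.submatrix id emb).submatrix embI id = G.submatrix embI emb := by
      ext a b
      simp [Matrix.submatrix_apply]
    rw [h1, h2, Matrix.det_transpose]
    rfl
  rw [Finset.sum_congr rfl fun P _ => hP P]
  exact Finset.sum_comm
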